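/- The contravariant McLenaghan–Tariq–Tupper metric is obtained from the invariant frame: for every x ∈ ℝ⁴, the matrix h^{ij}(x) := Σ_{k,l} 𝐆^{kl} ξ_k^i(x) ξ_l^j(x) satisfies Σ_j h^{ij}(x) g_{jm}(x) = δ^i_m for all i, m ∈ {1,2,3,4}; i.e. h(x) is the inverse matrix of g(x) at every point. -/
import Mathlib


/-- The McLenaghan–Tariq–Tupper metric components `g_{ij}(x)` (indices `0,…,3` for `1,…,4`). -/
noncomputable def mttMetric (k : ℝ) (x : Fin 4 → ℝ) : Matrix (Fin 4) (Fin 4) ℝ :=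
  !![1, 1, 0, -k * x 2;
     1, 0, 0, -k * x 2;
     0, 0, -Real.exp (-(k * x 1)), 0;
     -k * x 2, -k * x 2, 0, k ^ 2 * (x 2) ^ 2 - Real.exp (k * x 1)]
/-- The invariant vector fields `ξ₁,…,ξ₄` (indices `0,…,3`). -/
noncomputable def ξ (k : ℝ) (i : Fin 4) (x : Fin 4 → ℝ) : Fin 4 → ℝ :=
  ![![-1, 0, 0, 0],
    ![-k * x 2 * Real.exp (-(k * x 1) / 2), 0, 0, -Real.exp (-(k * x 1) / 2)],
    ![0, 0, -Real.exp (k * x 1 / 2), 0],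
    ![2, -1, 0, 0]] i

/-- The constant matrix `𝐆^{kl}` (the inverse of `𝐆`) with nonzero entries
`𝐆^{14} = 𝐆^{41} = −1`, `𝐆^{22} = −1`, `𝐆^{33} = −1`, `𝐆^{44} = −1`. -/
def GmatInv : Matrix (Fin 4) (Fin 4) ℝ :=
  !![0, 0, 0, -1;
     0, -1, 0, 0;
     0, 0, -1, 0;
     -1, 0, 0, -1]

/-- The contravariant metric is obtained from the invariant frame:
`h^{ij}(x) = Σ_{k,l} 𝐆^{kl} ξ_k^i(x) ξ_l^j(x)` is the inverse matrix of `g(x)` at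
every point: `Σ_j h^{ij}(x) g_{jm}(x) = δ^i_m`. -/
theorem contravariant_metric_frame (k : ℝ) (hk : 0 < k) (x : Fin 4 → ℝ) (i m : Fin 4) :
    ∑ j : Fin 4,
      (∑ a : Fin 4, ∑ b : Fin 4, GmatInv a b * ξ k a x i * ξ k b x j) * mttMetric k x j m
      = if i = m then (1 : ℝ) else 0 := by
  have he : (0:ℝ) < Real.exp (k * x 1 / 2) := Real.exp_pos _
  have h2 : Real.exp (k * x 1) = Real.exp (k * x 1 / 2) ^ 2 := by
    rw [sq, ← Real.exp_add]; ring_nf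
  have hn : Real.exp (-(k * x 1)) = (Real.exp (k * x 1 / 2) ^ 2)⁻¹ := by
    rw [← h2, Real.exp_neg]
  have hnh : Real.exp (-(k * x 1) / 2) = (Real.exp (k * x 1 / 2))⁻¹ := by
    rw [neg_div, Real.exp_neg]
  fin_cases i <;> fin_cases m <;>
    simp [mttMetric, ξ, GmatInv, Fin.sum_univ_four, Matrix.vecHead, Matrix.vecTail, h2, hn, hnh] <;>
    (try field_simp) <;> (try ring)
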